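/- Let q = p^n be a prime power, let H = (a_{i−j}) be a circulant q-Butson Hadamard matrix of dimension d = p^{m+n}, and let ζ ∈ ℂ be a primitive d-th root of unity. Each eigenvalue α_k = Σ_{j < d} a_j ζ^{jk} lies in ℤ[ζ], and the principal ideal (α_k) of ℤ[ζ] is a power of the unique prime ideal 𝔭 of ℤ[ζ] lying over the rational prime p; that is, there exists v_k ≥ 0 with (α_k) = 𝔭^{v_k}. -/

import Mathlib

/-- `H` is a `q`-Butson Hadamard matrix: every entry is a `q`-th root of unity
and `H * Hᴴ = d • I`. -/
def IsButsonHadamard (q d : ℕ) (H : Matrix (Fin d) (Fin d) ℂ) : Prop :=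
  (∀ i j, H i j ^ q = 1) ∧
    H * H.conjTranspose = (d : ℂ) • (1 : Matrix (Fin d) (Fin d) ℂ)

/-- Freshman's dream: if `x ^ p ^ t = 1` and `Q` is a prime ideal containing `p`,
then `x - 1 ∈ Q`. -/
private lemma freshman_aux {S : Type*} [CommRing S] {p t : ℕ} (hp : p.Prime)
    {x : S} (hx : x ^ p ^ t = 1) {Q : Ideal S} (hQ : Q.IsPrime) (hpQ : (p : S) ∈ Q) :
    x - 1 ∈ Q := by
  haveI := hQ
  haveI : IsDomain (S ⧸ Q) := Ideal.Quotient.isDomain Q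
  haveI : Nontrivial (S ⧸ Q) := Ideal.Quotient.nontrivial_iff.mpr hQ.ne_top
  set T := S ⧸ Q with hT
  set y : T := Ideal.Quotient.mk Q x with hy
  have hyp : y ^ p ^ t = 1 := by rw [hy, ← map_pow, hx, map_one]
  have hp0 : (p : T) = 0 := by
    have : ((p : ℕ) : T) = Ideal.Quotient.mk Q ((p : ℕ) : S) := by push_cast; rfl
    rw [this]
    exact Ideal.Quotient.eq_zero_iff_mem.mpr hpQ
  haveI : CharP T (ringChar T) := ringChar.charP T
  have hdvd : ringChar T ∣ p := (CharP.cast_eq_zero_iff T (ringChar T) p).mp hp0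
  have hchar : ringChar T = p := by
    rcases hp.eq_one_or_self_of_dvd _ hdvd with h | h
    · exact absurd h CharP.ringChar_ne_one
    · exact h
  haveI : CharP T p := hchar ▸ ringChar.charP T
  haveI : Fact p.Prime := ⟨hp⟩
  have h0 : (y - 1) ^ p ^ t = 0 := by
    rw [sub_pow_char_pow, hyp, one_pow, sub_self]
  have hy1 : y - 1 = 0 := by
    have hne : p ^ t ≠ 0 := pow_ne_zero _ hp.ne_zero
    exact (pow_eq_zero_iff hne).mp h0
  rw [← Ideal.Quotient.eq_zero_iff_mem, map_sub, map_one]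
  exact hy1

/-- In a Dedekind domain, a nonzero element all of whose prime ideal divisors
are `span {π}` generates a power of `span {π}`. -/
private lemma span_eq_prime_pow_aux {S : Type*} [CommRing S] [IsDedekindDomain S] {π α : S}
    (hπ : Prime π) (hα : α ≠ 0)
    (h : ∀ Q : Ideal S, Q.IsPrime → α ∈ Q → Q = Ideal.span {π}) :
    ∃ v : ℕ, Ideal.span {α} = Ideal.span {π} ^ v := by
  have hne : Ideal.span ({α} : Set S) ≠ 0 := by
    simpa [Ideal.zero_eq_bot, Ideal.span_singleton_eq_bot] using hα
  obtain ⟨f, hf, hprod⟩ := UniqueFactorizationMonoid.exists_prime_factors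
    (Ideal.span ({α} : Set S)) hne
  rw [associated_iff_eq] at hprod
  have hall : ∀ b ∈ f, b = Ideal.span {π} := by
    intro b hb
    have hbp := hf b hb
    have hdvd : b ∣ Ideal.span ({α} : Set S) := hprod ▸ Multiset.dvd_prod hb
    have hle : Ideal.span ({α} : Set S) ≤ b := Ideal.le_of_dvd hdvd
    exact h b (Ideal.isPrime_of_prime hbp) (hle (Ideal.subset_span rfl))
  refine ⟨Multiset.card f, ?_⟩
  rw [← hprod]
  conv_lhs => rw [Multiset.eq_replicate_card.mpr hall]
  rw [Multiset.prod_replicate]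

/-- The conjugate of a `d`-th root of unity is its `(d-1)`-st power. -/
private lemma conj_eq_pow_aux {x : ℂ} {d : ℕ} (hd : d ≠ 0) (hx : x ^ d = 1) :
    (starRingEnd ℂ) x = x ^ (d - 1) := by
  have hx0 : x ≠ 0 := by
    intro h
    rw [h, zero_pow hd] at hx
    exact one_ne_zero hx.symm
  have hn : ‖x‖ = 1 := Complex.norm_eq_one_of_pow_eq_one hx hd
  have hns : Complex.normSq x = 1 := by
    rw [Complex.normSq_eq_norm_sq, hn, one_pow]
  have h1 : x * (starRingEnd ℂ) x = 1 := by
    rw [Complex.mul_conj, hns, Complex.ofReal_one]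
  have h2 : x * x ^ (d - 1) = 1 := by
    rw [← pow_succ', Nat.sub_add_cancel (Nat.one_le_iff_ne_zero.mpr hd)]
    exact hx
  exact mul_left_cancel₀ hx0 (h1.trans h2.symm)

/-- The key analytic identity: an eigenvalue of a circulant matrix whose
autocorrelations vanish has `|α|² = d`. -/
private lemma eigen_mul_conj_aux {d k : ℕ} [NeZero d] (hd : 0 < d) {ζ : ℂ}
    (hζ : IsPrimitiveRoot ζ d)
    (a : ZMod d → ℂ)
    (hcorr : ∀ s : ZMod d, (∑ u : ZMod d, a (s + u) * (starRingEnd ℂ) (a u))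
        = if s = 0 then (d : ℂ) else 0) :
    (∑ j ∈ Finset.range d, a (j : ZMod d) * ζ ^ (j * k)) *
      (starRingEnd ℂ) (∑ j ∈ Finset.range d, a (j : ZMod d) * ζ ^ (j * k)) = (d : ℂ) := by
  set c := starRingEnd ℂ with hc
  set w : ZMod d → ℂ := fun x => ζ ^ (x.val * k) with hw
  have hmod : ∀ A : ℕ, ζ ^ A = ζ ^ (A % d) := by
    intro A
    conv_lhs => rw [← Nat.mod_add_div A d, pow_add, pow_mul, hζ.pow_eq_one, one_pow, mul_one]
  have hord : ∀ A B : ℕ, A ≡ B [MOD d] → ζ ^ A = ζ ^ B := by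
    intro A B hAB
    rw [hmod A, hmod B, hAB]
  have hwadd : ∀ x y : ZMod d, w (x + y) = w x * w y := by
    intro x y
    show ζ ^ ((x + y).val * k) = ζ ^ (x.val * k) * ζ ^ (y.val * k)
    rw [← pow_add]
    apply hord
    have h1 : (x + y).val ≡ x.val + y.val [MOD d] := by
      rw [ZMod.val_add]
      exact Nat.mod_modEq _ _
    simpa [add_mul] using h1.mul_right k
  have hnorm : ‖ζ‖ = 1 := Complex.norm_eq_one_of_pow_eq_one hζ.pow_eq_one hd.ne'
  have hwc : ∀ x : ZMod d, w x * c (w x) = 1 := by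
    intro x
    have hns : Complex.normSq (w x) = 1 := by
      rw [Complex.normSq_eq_norm_sq]
      show ‖ζ ^ (x.val * k)‖ ^ 2 = 1
      rw [norm_pow, hnorm, one_pow, one_pow]
    rw [hc, Complex.mul_conj, hns, Complex.ofReal_one]
  have hbij : Function.Bijective (fun t : Fin d => ((t : ℕ) : ZMod d)) := by
    rw [Fintype.bijective_iff_injective_and_card]
    constructor
    · intro t₁ t₂ h
      simp only [] at h
      have h1 := ZMod.val_cast_of_lt t₁.isLt
      have h2 := ZMod.val_cast_of_lt t₂.isLt
      refine Fin.ext ?_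
      rw [← h1, ← h2, h]
    · simp [ZMod.card]
  set e : Fin d ≃ ZMod d := Equiv.ofBijective _ hbij with he
  have hsum : (∑ j ∈ Finset.range d, a (j : ZMod d) * ζ ^ (j * k))
      = ∑ x : ZMod d, a x * w x := by
    rw [← Fin.sum_univ_eq_sum_range]
    apply Fintype.sum_equiv e
    intro t
    have hval : (((t : ℕ) : ZMod d)).val = (t : ℕ) := ZMod.val_cast_of_lt t.isLt
    show a ((t : ℕ) : ZMod d) * ζ ^ ((t : ℕ) * k) = a (e t) * w (e t)
    have het : e t = ((t : ℕ) : ZMod d) := rfl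
    rw [het, hw]
    simp only []
    rw [hval]
  rw [hsum, map_sum]
  simp_rw [map_mul]
  rw [Finset.sum_mul_sum, Finset.sum_comm]
  have hinner : ∀ y : ZMod d,
      (∑ x : ZMod d, (a x * w x) * (c (a y) * c (w y)))
        = ∑ s : ZMod d, (a (s + y) * c (a y)) * w s := by
    intro y
    rw [← Equiv.sum_comp (Equiv.addRight y) (fun x => (a x * w x) * (c (a y) * c (w y)))]
    apply Finset.sum_congr rfl
    intro s _
    show (a (s + y) * w (s + y)) * (c (a y) * c (w y)) = (a (s + y) * c (a y)) * w s
    rw [hwadd]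
    linear_combination (a (s + y) * c (a y) * w s) * hwc y
  calc (∑ y : ZMod d, ∑ x : ZMod d, (a x * w x) * (c (a y) * c (w y)))
      = ∑ y : ZMod d, ∑ s : ZMod d, (a (s + y) * c (a y)) * w s := by
        exact Finset.sum_congr rfl fun y _ => hinner y
    _ = ∑ s : ZMod d, ∑ y : ZMod d, (a (s + y) * c (a y)) * w s := Finset.sum_comm
    _ = ∑ s : ZMod d, (∑ y : ZMod d, a (s + y) * c (a y)) * w s := by
        exact Finset.sum_congr rfl fun s _ => (Finset.sum_mul _ _ _).symm
    _ = ∑ s : ZMod d, (if s = 0 then (d : ℂ) else 0) * w s := by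
        exact Finset.sum_congr rfl fun s _ => by rw [hcorr s]
    _ = (d : ℂ) := by
        rw [Finset.sum_eq_single 0]
        · simp [hw, ZMod.val_zero]
        · intro b _ hb
          simp [hb]
        · intro h
          exact absurd (Finset.mem_univ 0) h

set_option maxHeartbeats 1000000 in
set_option synthInstance.maxHeartbeats 1000000 in
/-- Transfer along `ℤ[ζ] ≃ 𝓞(CyclotomicField)`: the principal ideal generated by a
divisor of `p ^ e` is a power of the prime over `p`. -/
private lemma ideal_pow_aux {p e t : ℕ} (hp : p.Prime) (ht : e = t + 1)
    {ζ : ℂ} (hζ : IsPrimitiveRoot ζ (p ^ e))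
    (α β : Algebra.adjoin ℤ ({ζ} : Set ℂ))
    (hαβ : α * β = (p : Algebra.adjoin ℤ ({ζ} : Set ℂ)) ^ e)
    (hαne : α ≠ 0)
    (𝔭 : Ideal (Algebra.adjoin ℤ ({ζ} : Set ℂ))) (h𝔭 : 𝔭.IsPrime)
    (hp𝔭 : (p : Algebra.adjoin ℤ ({ζ} : Set ℂ)) ∈ 𝔭) :
    ∃ v : ℕ, Ideal.span {α} = 𝔭 ^ v := by
  have hd : 0 < p ^ e := pow_pos hp.pos _
  haveI : Fact p.Prime := ⟨hp⟩
-- set up the cyclotomic field machinery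
  set P : ℕ+ := ⟨p, hp.pos⟩ with hP
  haveI : Fact (Nat.Prime (P : ℕ)) := ⟨hp⟩
  have hPcoe : ((P ^ e : ℕ+) : ℕ) = p ^ e := by
    rw [PNat.pow_coe]
    rfl
  set K0 := CyclotomicField (P ^ e) ℚ with hK0
  haveI : IsCyclotomicExtension {(P : ℕ) ^ e} ℚ K0 :=
    CyclotomicField.isCyclotomicExtension ((P : ℕ) ^ e) ℚ
  haveI : NumberField K0 := IsCyclotomicExtension.numberField {(P : ℕ) ^ e} ℚ K0
  have hζ0' : IsPrimitiveRoot (IsCyclotomicExtension.zeta (P ^ e) ℚ K0)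
      ((P : ℕ) ^ e) := IsCyclotomicExtension.zeta_spec (P ^ e) ℚ K0
  set ζ0 : K0 := IsCyclotomicExtension.zeta (P ^ e) ℚ K0 with hζ0def
  have hζ0 : IsPrimitiveRoot ζ0 (p ^ e) := hζ0'
  -- the embedding `K0 →ₐ[ℚ] ℂ` sending `ζ0` to `ζ`
  set pb := hζ0'.powerBasis ℚ with hpb
  have hroot : (Polynomial.aeval ζ) (minpoly ℚ pb.gen) = 0 := by
    rw [hpb, IsPrimitiveRoot.powerBasis_gen]
    rw [← Polynomial.cyclotomic_eq_minpoly_rat hζ0 hd]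
    rw [Polynomial.aeval_def, ← Polynomial.eval_map, Polynomial.map_cyclotomic]
    exact hζ.isRoot_cyclotomic hd
  set f : K0 →ₐ[ℚ] ℂ := pb.lift ζ hroot with hf
  have hfζ : f ζ0 = ζ := by
    have hgen : pb.gen = ζ0 := by
      rw [hpb]
      exact IsPrimitiveRoot.powerBasis_gen ℚ hζ0'
    have hlg := pb.lift_gen ζ hroot
    rw [hgen] at hlg
    exact hlg
  have hinj : Function.Injective f := f.toRingHom.injective
  set g : K0 →ₐ[ℤ] ℂ := f.restrictScalars ℤ with hg
  have hginj : Function.Injective g := hinj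
  have hmap : Subalgebra.map g (Algebra.adjoin ℤ {ζ0}) = Algebra.adjoin ℤ {ζ} := by
    rw [AlgHom.map_adjoin]
    congr 1
    rw [Set.image_singleton]
    show ({f ζ0} : Set ℂ) = {ζ}
    rw [hfζ]
  set e1 : Algebra.adjoin ℤ ({ζ0} : Set K0) ≃ₐ[ℤ] Algebra.adjoin ℤ ({ζ} : Set ℂ) :=
    ((Algebra.adjoin ℤ ({ζ0} : Set K0)).equivMapOfInjective g hginj).trans
      (Subalgebra.equivOfEq _ _ hmap) with he1
  set e2 : Algebra.adjoin ℤ ({ζ0} : Set K0) ≃ₐ[ℤ] NumberField.RingOfIntegers K0 :=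
    hζ0'.adjoinEquivRingOfIntegers with he2
  set φ : Algebra.adjoin ℤ ({ζ} : Set ℂ) ≃+* NumberField.RingOfIntegers K0 :=
    (e1.symm.trans e2).toRingEquiv with hφ
  -- the prime element π = ζ0 - 1
  haveI hcyc' : IsCyclotomicExtension {(P : ℕ) ^ (t + 1)} ℚ K0 := by
    rw [← ht]
    infer_instance
  have hζ0'' : IsPrimitiveRoot ζ0 ((P : ℕ) ^ (t + 1)) := by
    rw [← ht]
    exact hζ0'
  set π : NumberField.RingOfIntegers K0 := hζ0''.toInteger - 1 with hπdef
  have hπprime : Prime π := hζ0''.zeta_sub_one_prime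
  have hζint : hζ0''.toInteger ^ (p ^ e) = 1 := by
    have h1 := hζ0''.toInteger_isPrimitiveRoot.pow_eq_one
    have hexp : (P : ℕ) ^ (t + 1) = p ^ e := by
      subst ht; rfl
    rw [← hexp]
    exact h1
  -- uniqueness of the prime over p
  have huniq : ∀ Q : Ideal (NumberField.RingOfIntegers K0), Q.IsPrime →
      (p : NumberField.RingOfIntegers K0) ∈ Q → Q = Ideal.span {π} := by
    intro Q hQ hpQ
    have hπQ : π ∈ Q := freshman_aux hp hζint hQ hpQ
    have hsp : (Ideal.span ({π} : Set (NumberField.RingOfIntegers K0))).IsPrime :=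
      (Ideal.span_singleton_prime hπprime.ne_zero).mpr hπprime
    have hsb : Ideal.span ({π} : Set (NumberField.RingOfIntegers K0)) ≠ ⊥ := by
      simpa [Ideal.span_singleton_eq_bot] using hπprime.ne_zero
    have hmax := hsp.isMaximal hsb
    exact (hmax.eq_of_le hQ.ne_top (Ideal.span_le.mpr (by simpa using hπQ))).symm
  -- transfer
  haveI := h𝔭
  have hαβ' : φ α * φ β = (p : NumberField.RingOfIntegers K0) ^ e := by
    rw [← map_mul, hαβ, map_pow, map_natCast]
  have hprimefact : ∀ Q : Ideal (NumberField.RingOfIntegers K0), Q.IsPrime →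
      φ α ∈ Q → Q = Ideal.span {π} := by
    intro Q hQ hmemQ
    apply huniq Q hQ
    have h1 : φ α * φ β ∈ Q := Ideal.mul_mem_right _ _ hmemQ
    rw [hαβ'] at h1
    exact hQ.mem_of_pow_mem _ h1
  have hα'ne : φ α ≠ 0 := by
    intro h0
    exact hαne (φ.injective (h0.trans (map_zero φ).symm))
  obtain ⟨v, hv⟩ := span_eq_prime_pow_aux hπprime hα'ne hprimefact
  have hmapp : Ideal.map φ 𝔭 = Ideal.span {π} := by
    apply huniq
    · exact Ideal.map_isPrime_of_equiv φ (I := 𝔭)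
    · have hpeq : (p : NumberField.RingOfIntegers K0) = φ (p : Algebra.adjoin ℤ {ζ}) := (map_natCast φ p).symm
      rw [hpeq]
      exact Ideal.mem_map_of_mem _ hp𝔭
  refine ⟨v, ?_⟩
  have hmapspan : Ideal.map φ (Ideal.span {α}) = Ideal.map φ (𝔭 ^ v) := by
    rw [Ideal.map_span, Set.image_singleton, Ideal.map_pow, hmapp, hv]
  calc Ideal.span {α}
      = Ideal.comap φ (Ideal.map φ (Ideal.span {α})) :=
        (Ideal.comap_map_of_bijective _ φ.bijective).symm
    _ = Ideal.comap φ (Ideal.map φ (𝔭 ^ v)) := by rw [hmapspan]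
    _ = 𝔭 ^ v := Ideal.comap_map_of_bijective _ φ.bijective

set_option synthInstance.maxHeartbeats 1000000 in
/-- For a circulant `p^n`-Butson Hadamard matrix `H i j = a (i - j)` of
dimension `d = p^(m+n)` and `ζ` a primitive `d`-th root of unity, the
eigenvalue `α_k = ∑_{j<d} a j ζ^(jk)` lies in `ℤ[ζ]`, and the principal ideal
it generates is a power of any (hence the unique) prime ideal of `ℤ[ζ]` lying
over `p`. -/
theorem circulant_butson_eigenvalue_ideal (p n m : ℕ) (hp : p.Prime)
    (a : ZMod (p ^ (m + n)) → ℂ)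
    (H : Matrix (Fin (p ^ (m + n))) (Fin (p ^ (m + n))) ℂ)
    (ha : ∀ i j, H i j = a (((i : ℕ) : ZMod (p ^ (m + n))) -
      ((j : ℕ) : ZMod (p ^ (m + n)))))
    (hH : IsButsonHadamard (p ^ n) (p ^ (m + n)) H)
    (ζ : ℂ) (hζ : IsPrimitiveRoot ζ (p ^ (m + n))) (k : ℕ) :
    (∑ j ∈ Finset.range (p ^ (m + n)),
        a (j : ZMod (p ^ (m + n))) * ζ ^ (j * k)) ∈ Algebra.adjoin ℤ {ζ} ∧
      ∀ α : Algebra.adjoin ℤ {ζ},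
        (α : ℂ) = ∑ j ∈ Finset.range (p ^ (m + n)),
            a (j : ZMod (p ^ (m + n))) * ζ ^ (j * k) →
          ∀ 𝔭 : Ideal (Algebra.adjoin ℤ {ζ}), 𝔭.IsPrime →
            (p : Algebra.adjoin ℤ {ζ}) ∈ 𝔭 →
              ∃ v : ℕ, Ideal.span {α} = 𝔭 ^ v := by
  by_cases hmn : m + n = 0
  · -- degenerate case `d = 1`
    have hn0 : n = 0 := Nat.eq_zero_of_add_eq_zero_left hmn
    have hd1 : p ^ (m + n) = 1 := by rw [hmn, pow_zero]
    have hd : 0 < p ^ (m + n) := by rw [hd1]; exact one_pos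
    set i0 : Fin (p ^ (m + n)) := ⟨0, hd⟩ with hi0
    have hH1 : H i0 i0 = 1 := by
      have := hH.1 i0 i0
      rwa [hn0, pow_zero, pow_one] at this
    have ha0 : a 0 = 1 := by
      have := ha i0 i0
      rw [sub_self] at this
      rw [← this, hH1]
    have hsum1 : (∑ j ∈ Finset.range (p ^ (m + n)),
        a (j : ZMod (p ^ (m + n))) * ζ ^ (j * k)) = 1 := by
      rw [show Finset.range (p ^ (m + n)) = {0} from by rw [hd1]; rfl,
        Finset.sum_singleton]
      simp [ha0]
    rw [hsum1]
    refine ⟨one_mem _, ?_⟩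
    intro α hα 𝔭 h𝔭 hp𝔭
    have hα1 : α = 1 := by
      apply Subtype.coe_injective
      show (α : ℂ) = ((1 : Algebra.adjoin ℤ {ζ}) : ℂ)
      rw [hα]
      rfl
    refine ⟨0, ?_⟩
    rw [hα1, pow_zero, Ideal.one_eq_top, Ideal.span_singleton_one]
  · -- main case
    obtain ⟨t, ht0⟩ := Nat.exists_eq_succ_of_ne_zero hmn
    have ht : m + n = t + 1 := ht0
    have hd : 0 < p ^ (m + n) := pow_pos hp.pos _
    haveI : NeZero (p ^ (m + n)) := ⟨hd.ne'⟩
    haveI : Fact p.Prime := ⟨hp⟩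
    set c := starRingEnd ℂ with hc
    -- the autocorrelation identity
    have hmat : ∀ i i' : Fin (p ^ (m + n)),
        (∑ u : Fin (p ^ (m + n)), H i u * c (H i' u))
          = if i = i' then ((p ^ (m + n) : ℕ) : ℂ) else 0 := by
      intro i i'
      have h2 := congrFun (congrFun hH.2 i) i'
      rw [Matrix.mul_apply] at h2
      simp only [Matrix.conjTranspose_apply, Matrix.smul_apply, Matrix.one_apply,
        smul_eq_mul] at h2
      simp only [show ∀ z : ℂ, star z = c z from fun _ => rfl] at h2
      rw [h2]
      split_ifs <;> simp
    have hbij : Function.Bijective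
        (fun u : Fin (p ^ (m + n)) => ((u : ℕ) : ZMod (p ^ (m + n)))) := by
      rw [Fintype.bijective_iff_injective_and_card]
      constructor
      · intro t₁ t₂ h
        simp only [] at h
        have h1 := ZMod.val_cast_of_lt t₁.isLt
        have h2 := ZMod.val_cast_of_lt t₂.isLt
        refine Fin.ext ?_
        rw [← h1, ← h2, h]
      · simp [ZMod.card]
    have hcorr : ∀ s : ZMod (p ^ (m + n)),
        (∑ u : ZMod (p ^ (m + n)), a (s + u) * c (a u))
          = if s = 0 then ((p ^ (m + n) : ℕ) : ℂ) else 0 := by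
      intro s
      set i : Fin (p ^ (m + n)) := ⟨s.val, ZMod.val_lt s⟩ with hidef
      set z : Fin (p ^ (m + n)) := ⟨0, hd⟩ with hzdef
      have him : ((i : ℕ) : ZMod (p ^ (m + n))) = s := ZMod.natCast_rightInverse s
      have hzm : ((z : ℕ) : ZMod (p ^ (m + n))) = 0 := by
        show ((0 : ℕ) : ZMod (p ^ (m + n))) = 0
        exact Nat.cast_zero
      have hL : (∑ u : Fin (p ^ (m + n)), H i u * c (H z u))
          = ∑ u : ZMod (p ^ (m + n)), a (s + u) * c (a u) := by
        apply Fintype.sum_equiv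
          ((Equiv.ofBijective _ hbij).trans (Equiv.neg (ZMod (p ^ (m + n)))))
        intro u
        rw [ha i u, ha z u, him, hzm, zero_sub]
        show a (s - ((u : ℕ) : ZMod (p ^ (m + n)))) * c (a (-((u : ℕ) : ZMod (p ^ (m + n)))))
          = a (s + (-((u : ℕ) : ZMod (p ^ (m + n))))) * c (a (-((u : ℕ) : ZMod (p ^ (m + n)))))
        rw [sub_eq_add_neg]
      have hif : (i = z) = (s = 0) := by
        apply propext
        constructor
        · intro h
          have : s.val = 0 := by
            have := congrArg Fin.val h
            exact this
          exact (ZMod.val_eq_zero s).mp this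
        · intro h
          subst h
          refine Fin.ext ?_
          simp [hidef, hzdef, ZMod.val_zero]
      rw [← hL, hmat i z]
      exact if_congr (iff_of_eq hif) rfl rfl
    -- entries of `a` are `d`-th roots of unity
    have haroot : ∀ j : ℕ, j < p ^ (m + n) → (a ((j : ℕ) : ZMod (p ^ (m + n)))) ^ (p ^ (m + n)) = 1 := by
      intro j hj
      have h1 : H ⟨j, hj⟩ ⟨0, hd⟩ = a ((j : ℕ) : ZMod (p ^ (m + n))) := by
        rw [ha]
        norm_num
      have h2 := hH.1 ⟨j, hj⟩ ⟨0, hd⟩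
      rw [h1] at h2
      have h3 : p ^ (m + n) = p ^ n * p ^ m := by rw [← pow_add, add_comm]
      have h4 : (a ((j : ℕ) : ZMod (p ^ (m + n)))) ^ (p ^ n * p ^ m) = 1 := by
        rw [pow_mul, h2, one_pow]
      convert h4 using 2
    have hamem : ∀ j : ℕ, j < p ^ (m + n) →
        a ((j : ℕ) : ZMod (p ^ (m + n))) ∈ Algebra.adjoin ℤ {ζ} := by
      intro j hj
      obtain ⟨i, _, hi⟩ := hζ.eq_pow_of_pow_eq_one (haroot j hj)
      rw [← hi]
      exact pow_mem (Algebra.self_mem_adjoin_singleton ℤ ζ) _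
    have hmem : (∑ j ∈ Finset.range (p ^ (m + n)),
        a (j : ZMod (p ^ (m + n))) * ζ ^ (j * k)) ∈ Algebra.adjoin ℤ {ζ} := by
      apply Subalgebra.sum_mem
      intro j hj
      exact mul_mem (hamem j (Finset.mem_range.mp hj))
        (pow_mem (Algebra.self_mem_adjoin_singleton ℤ ζ) _)
    refine ⟨hmem, ?_⟩
    intro α hα 𝔭 h𝔭 hp𝔭
    -- the product with the conjugate
    have hprod : (∑ j ∈ Finset.range (p ^ (m + n)), a (j : ZMod (p ^ (m + n))) * ζ ^ (j * k)) *
        c (∑ j ∈ Finset.range (p ^ (m + n)), a (j : ZMod (p ^ (m + n))) * ζ ^ (j * k))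
          = ((p ^ (m + n) : ℕ) : ℂ) :=
      eigen_mul_conj_aux hd hζ a hcorr
    have hconjmem : c (∑ j ∈ Finset.range (p ^ (m + n)),
        a (j : ZMod (p ^ (m + n))) * ζ ^ (j * k)) ∈ Algebra.adjoin ℤ {ζ} := by
      rw [map_sum]
      apply Subalgebra.sum_mem
      intro j hj
      rw [map_mul, map_pow, hc,
        conj_eq_pow_aux hd.ne' (haroot j (Finset.mem_range.mp hj)),
        conj_eq_pow_aux hd.ne' hζ.pow_eq_one]
      exact mul_mem (pow_mem (hamem j (Finset.mem_range.mp hj)) _)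
        (pow_mem (pow_mem (Algebra.self_mem_adjoin_singleton ℤ ζ) _) _)
    set β : ↥(Algebra.adjoin ℤ {ζ}) := ⟨c (∑ j ∈ Finset.range (p ^ (m + n)),
        a (j : ZMod (p ^ (m + n))) * ζ ^ (j * k)), hconjmem⟩ with hβ
    have hαβ : α * β = (p : Algebra.adjoin ℤ {ζ}) ^ (m + n) := by
      apply Subtype.coe_injective
      show ((α * β : Algebra.adjoin ℤ {ζ}) : ℂ) = (((p : Algebra.adjoin ℤ {ζ}) ^ (m + n) : Algebra.adjoin ℤ {ζ}) : ℂ)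
      have h1 : ((α * β : Algebra.adjoin ℤ {ζ}) : ℂ) = (α : ℂ) * (β : ℂ) := rfl
      have h2 : (((p : Algebra.adjoin ℤ {ζ}) ^ (m + n) : Algebra.adjoin ℤ {ζ}) : ℂ) = ((p : ℂ)) ^ (m + n) := by
        push_cast
        rfl
      rw [h1, h2, hα, hβ]
      rw [hprod]
      push_cast
      rfl
    have hαne : α ≠ 0 := by
      intro h0
      rw [h0] at hα
      have : (0 : ℂ) = ∑ j ∈ Finset.range (p ^ (m + n)),
          a (j : ZMod (p ^ (m + n))) * ζ ^ (j * k) := hα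
      rw [← this] at hprod
      simp only [zero_mul] at hprod
      have : ((p ^ (m + n) : ℕ) : ℂ) ≠ 0 := by
        exact_mod_cast hd.ne'
      exact this hprod.symm
    exact ideal_pow_aux hp ht hζ α β hαβ hαne 𝔭 h𝔭 hp𝔭
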